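/- Let S and A be nonempty finite sets and let p be a transition kernel as defined, with minimal budget k_*. Then for every (s,a) ∈ S × A the minimal budget satisfies the Bellman-like recursion k_*(s,a) = max over s' with p(s'|s,a) > 0 of [1{p(s',1|s,a) > 0} + min_{a' ∈ A} k_*(s',a')]; equivalently, T_p k_* = k_*. -/
import Mathlib


open scoped Classical ENNReal

variable {S A : Type*}

/-- The budget operator `T_p` associated with a transition kernel
`p : S → A → PMF (S × Bool)` (second component = binary damage indicator):
`(T_p k)(s,a) = max_{s' : p(s'|s,a) > 0} [ 1{p(s',1|s,a) > 0} + min_{a'} k(s',a') ]`,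
where `p(s'|s,a) = p(s',0|s,a) + p(s',1|s,a)`. -/
noncomputable def budgetOp [Fintype S] [Fintype A] (p : S → A → PMF (S × Bool))
    (k : S → A → ℕ∞) : S → A → ℕ∞ := fun s a =>
  (Finset.univ.filter fun s' : S => 0 < p s a (s', false) + p s a (s', true)).sup
    fun s' => (if 0 < p s a (s', true) then 1 else 0) + Finset.univ.inf fun a' => k s' a'

/-- Probability, under the Markov chain started at `(s,a)` and thereafter governed by the
stationary deterministic policy `π`, that the trajectory starts with the given finite
prefix of `(state, damage)` pairs. -/
noncomputable def pathProb (p : S → A → PMF (S × Bool)) (π : S → A) :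
    S → A → List (S × Bool) → ℝ≥0∞
  | _, _, [] => 1
  | s, a, x :: xs => p s a x * pathProb p π x.1 (π x.1) xs

/-- Total damage accumulated along a finite trajectory prefix. -/
def pathDamage : List (S × Bool) → ℕ := fun l => (l.map fun x => if x.2 then 1 else 0).sum

/-- `SafeAS p π s a k` states that, with probability one under the trajectory law
`P_{s,a,π}` (which exists by Ionescu–Tulcea), the total damage `D = Σ_{t≥1} d_t` satisfies
`D ≤ k`.  Since the state space is finite, this is equivalent to: every finite trajectory
prefix occurring with positive probability has accumulated damage at most `k`, which is how
we encode it (this Mathlib version does not provide the Ionescu–Tulcea construction). -/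
def SafeAS (p : S → A → PMF (S × Bool)) (π : S → A) (s : S) (a : A) (k : ℕ∞) : Prop :=
  ∀ l : List (S × Bool), pathProb p π s a l ≠ 0 → (pathDamage l : ℕ∞) ≤ k

/-- The minimal budget `k_*(s,a)`: the least `k ∈ ℕ ∪ {∞}` for which some stationary
deterministic policy keeps total damage `≤ k` with probability one from `(s,a)`. -/
noncomputable def minBudget (p : S → A → PMF (S × Bool)) (s : S) (a : A) : ℕ∞ :=
  sInf {k : ℕ∞ | ∃ π : S → A, SafeAS p π s a k}

/-- A policy attaining the minimal budget exists (the infimum is attained, since `ℕ∞` is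
well-ordered and the constraint set contains `⊤`). -/
lemma minBudget_exists_policy [Nonempty A] (p : S → A → PMF (S × Bool)) (s : S) (a : A) :
    ∃ π : S → A, SafeAS p π s a (minBudget p s a) := by
  have hne : {k : ℕ∞ | ∃ π : S → A, SafeAS p π s a k}.Nonempty :=
    ⟨⊤, fun _ => Classical.arbitrary A, fun l _ => le_top⟩
  exact csInf_mem hne

lemma minBudget_le (p : S → A → PMF (S × Bool)) (s : S) (a : A) {k : ℕ∞} {π : S → A}
    (h : SafeAS p π s a k) : minBudget p s a ≤ k := sInf_le ⟨π, h⟩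

lemma pathDamage_cons (x : S × Bool) (l : List (S × Bool)) :
    pathDamage (x :: l) = (if x.2 then 1 else 0) + pathDamage l := by
  simp [pathDamage]

/-- The hard direction: `T_p k_* ≤ k_*`. -/
lemma budgetOp_le [Fintype S] [Fintype A] [Nonempty A] (p : S → A → PMF (S × Bool))
    (s : S) (a : A) : budgetOp p (minBudget p) s a ≤ minBudget p s a := by
  apply Finset.sup_le
  intro s' hs'
  obtain ⟨π, hπ⟩ := minBudget_exists_policy p s a
  have hpos := (Finset.mem_filter.mp hs').2
  by_cases hd : 0 < p s a (s', true)
  · have hne : p s a (s', true) ≠ 0 := hd.ne'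
    have h1 : (1 : ℕ∞) ≤ minBudget p s a := by
      have h := hπ [(s', true)] (by simp [pathProb, hne])
      simpa [pathDamage] using h
    have hsafe : SafeAS p π s' (π s') (minBudget p s a - 1) := by
      intro l hl
      have h := hπ ((s', true) :: l) (by simp [pathProb]; exact ⟨hne, hl⟩)
      have hdam : pathDamage ((s', true) :: l) = 1 + pathDamage l := by
        simp [pathDamage]
      rw [hdam, Nat.cast_add, Nat.cast_one] at h
      exact ENat.le_sub_of_add_le_left (by simp) h
    have hmin : minBudget p s' (π s') ≤ minBudget p s a - 1 := minBudget_le _ _ _ hsafe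
    rw [if_pos hd]
    calc (1 : ℕ∞) + Finset.univ.inf (fun a' => minBudget p s' a')
        ≤ 1 + minBudget p s' (π s') := by
          gcongr; exact Finset.inf_le (Finset.mem_univ _)
      _ ≤ 1 + (minBudget p s a - 1) := by gcongr
      _ = minBudget p s a := add_tsub_cancel_of_le h1
  · have ht0 : p s a (s', true) = 0 := by
      rw [pos_iff_ne_zero] at hd; exact not_not.mp hd
    rw [ht0, add_zero] at hpos
    have hfne : p s a (s', false) ≠ 0 := hpos.ne'
    have hsafe : SafeAS p π s' (π s') (minBudget p s a) := by
      intro l hl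
      have h := hπ ((s', false) :: l) (by simp [pathProb]; exact ⟨hfne, hl⟩)
      rw [pathDamage_cons] at h
      simpa using h
    have hmin : minBudget p s' (π s') ≤ minBudget p s a := minBudget_le _ _ _ hsafe
    rw [if_neg hd, zero_add]
    exact (Finset.inf_le (Finset.mem_univ _)).trans hmin

/-- The easy direction via the greedy policy: `k_* ≤ T_p k_*`. -/
lemma le_budgetOp [Fintype S] [Fintype A] [Nonempty A] (p : S → A → PMF (S × Bool))
    (s : S) (a : A) : minBudget p s a ≤ budgetOp p (minBudget p) s a := by
  -- greedy policy
  obtain ⟨π, hπ⟩ : ∃ π : S → A, ∀ s' : S,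
      minBudget p s' (π s') = Finset.univ.inf fun a' => minBudget p s' a' := by
    choose f hf using fun s' : S =>
      Finset.exists_mem_eq_inf Finset.univ Finset.univ_nonempty
        (fun a' => minBudget p s' a')
    exact ⟨f, fun s' => ((hf s').2).symm⟩
  have key : ∀ l : List (S × Bool), ∀ s a, pathProb p π s a l ≠ 0 →
      (pathDamage l : ℕ∞) ≤ budgetOp p (minBudget p) s a := by
    intro l
    induction l with
    | nil => intro s a _; simp [pathDamage]
    | cons x l ih =>
      intro s a hl
      obtain ⟨s', d⟩ := x
      rw [pathProb] at hl
      have hx : p s a (s', d) ≠ 0 := fun h => hl (by simp [h])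
      have hrest : pathProb p π s' (π s') l ≠ 0 := fun h => hl (by simp [h])
      have ihl : (pathDamage l : ℕ∞) ≤ Finset.univ.inf fun a' => minBudget p s' a' := by
        rw [← hπ s']
        exact ((ih s' (π s') hrest).trans (budgetOp_le p s' (π s')))
      have hmem : s' ∈ Finset.univ.filter
          fun t : S => 0 < p s a (t, false) + p s a (t, true) := by
        simp only [Finset.mem_filter, Finset.mem_univ, true_and]
        have hxpos : 0 < p s a (s', d) := pos_iff_ne_zero.mpr hx
        cases d
        · exact lt_of_lt_of_le hxpos le_self_add
        · exact lt_of_lt_of_le hxpos le_add_self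
      have hstep : (pathDamage ((s', d) :: l) : ℕ∞) ≤
          (if 0 < p s a (s', true) then 1 else 0) +
            Finset.univ.inf fun a' => minBudget p s' a' := by
        rw [pathDamage_cons, Nat.cast_add]
        refine add_le_add ?_ ihl
        cases d
        · simp
        · have hpt : 0 < p s a (s', true) := pos_iff_ne_zero.mpr hx
          simp [hpt]
      exact hstep.trans (Finset.le_sup
        (f := fun t : S => (if 0 < p s a (t, true) then 1 else 0) +
          Finset.univ.inf fun a' => minBudget p t a') hmem)
  exact minBudget_le _ _ _ (fun l => key l s a)

/-- the minimal budget satisfies the Bellman-like recursion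
`k_*(s,a) = max_{s' : p(s'|s,a)>0} [ 1{p(s',1|s,a)>0} + min_{a'} k_*(s',a') ]`,
i.e. `T_p k_* = k_*`. -/
theorem minBudget_recursion
    [Fintype S] [Nonempty S] [Fintype A] [Nonempty A]
    (p : S → A → PMF (S × Bool)) :
    (∀ s a, minBudget p s a =
      (Finset.univ.filter fun s' : S => 0 < p s a (s', false) + p s a (s', true)).sup
        fun s' => (if 0 < p s a (s', true) then 1 else 0) +
          Finset.univ.inf fun a' => minBudget p s' a') ∧
    budgetOp p (minBudget p) = minBudget p := by
  have h : ∀ s a, budgetOp p (minBudget p) s a = minBudget p s a := fun s a =>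
    le_antisymm (budgetOp_le p s a) (le_budgetOp p s a)
  exact ⟨fun s a => (h s a).symm, funext fun s => funext fun a => h s a⟩
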